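/- arXiv:2109.06269 — 6 statements merged into one kernel-verified Lean document; each statement's English description precedes it below -/
import Mathlib

section
/- If X is a star set for a nonzero eigenvalue λ of a connected graph G, then the star complement V(G)\X is a dominating set of G. -/
open Matrix SimpleGraph

variable {V : Type*} [Fintype V] [DecidableEq V]

/-- Adjacency matrix of a simple graph over ℝ (classically decidable). -/
noncomputable def adjM (G : SimpleGraph V) : Matrix V V ℝ :=
  letI := Classical.decRel G.Adj
  G.adjMatrix ℝ

/-- Multiplicity of `lam` as an adjacency eigenvalue of `G`. -/
noncomputable def eigMult (G : SimpleGraph V) (lam : ℝ) : ℕ :=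
  Module.finrank ℝ (LinearMap.ker (Matrix.toLin' (adjM G - lam • (1 : Matrix V V ℝ))))

/-- `D` is a dominating set of `G`. -/
def IsDomSet (G : SimpleGraph V) (D : Finset V) : Prop :=
  ∀ v ∉ D, ∃ u ∈ D, G.Adj v u

/-- Domination number. -/
noncomputable def domNum (G : SimpleGraph V) : ℕ :=
  sInf {k | ∃ D : Finset V, IsDomSet G D ∧ D.card = k}

/-- `D` is a total dominating set of `G`. -/
def IsTotalDomSet (G : SimpleGraph V) (D : Finset V) : Prop :=
  ∀ v : V, ∃ u ∈ D, G.Adj v u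

/-- Total domination number. -/
noncomputable def totalDomNum (G : SimpleGraph V) : ℕ :=
  sInf {k | ∃ D : Finset V, IsTotalDomSet G D ∧ D.card = k}

/-- `D` is a `p`-dominating set of `G`. -/
def IsPDomSet (G : SimpleGraph V) (p : ℕ) (D : Finset V) : Prop :=
  ∀ v ∉ D, p ≤ (G.neighborSet v ∩ ↑D).ncard

/-- `p`-domination number. -/
noncomputable def pDomNum (G : SimpleGraph V) (p : ℕ) : ℕ :=
  sInf {k | ∃ D : Finset V, IsPDomSet G p D ∧ D.card = k}

/-- `X` is a star set for the eigenvalue `lam` of `G`: `lam` is an eigenvalue of `G`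
with multiplicity `|X|`, and `lam` is not an eigenvalue of the induced subgraph `G - X`. -/
def IsStarSet (G : SimpleGraph V) (lam : ℝ) (X : Finset V) : Prop :=
  0 < eigMult G lam ∧ eigMult G lam = X.card ∧
    ∀ α : {v : V // v ∉ X} → ℝ,
      (Matrix.of fun i j : {v : V // v ∉ X} => adjM G i.1 j.1).mulVec α = lam • α → α = 0

/-- Minimum degree. -/
noncomputable def minDeg (G : SimpleGraph V) : ℕ :=
  sInf {d | ∃ v : V, (G.neighborSet v).ncard = d}

/-- Number of distinct adjacency eigenvalues of `G`. -/
noncomputable def numEigs (G : SimpleGraph V) : ℕ :=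
  {lam : ℝ | 0 < eigMult G lam}.ncard

theorem stmt_0 (G : SimpleGraph V) (hG : G.Connected) (lam : ℝ) (hlam : lam ≠ 0)
    (X : Finset V) (hX : IsStarSet G lam X) :
    IsDomSet G Xᶜ := by
  classical
  intro v hv
  rw [Finset.mem_compl, not_not] at hv
  by_contra hcon
  push_neg at hcon
  set K := LinearMap.ker (Matrix.toLin' (adjM G - lam • (1 : Matrix V V ℝ))) with hK
  have hmem : ∀ x : V → ℝ, x ∈ K ↔ (adjM G).mulVec x = lam • x := by
    intro x
    rw [hK, LinearMap.mem_ker, Matrix.toLin'_apply, Matrix.sub_mulVec, sub_eq_zero,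
      Matrix.smul_mulVec, Matrix.one_mulVec]
  have hadj : ∀ a b : V, adjM G a b = if G.Adj a b then 1 else 0 := by
    intro a b
    simp [adjM, SimpleGraph.adjMatrix_apply]
  let r : K →ₗ[ℝ] ({u : V // u ∈ X} → ℝ) := (LinearMap.funLeft ℝ ℝ Subtype.val).comp K.subtype
  have hinj : Function.Injective r := by
    rw [← LinearMap.ker_eq_bot, LinearMap.ker_eq_bot']
    intro x hx
    have hx' : ∀ u ∈ X, (x : V → ℝ) u = 0 := fun u hu => congrFun hx ⟨u, hu⟩
    have heig := (hmem x).mp x.2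
    have hzero : (fun i : {u : V // u ∉ X} => (x : V → ℝ) i.1) = 0 := by
      apply hX.2.2
      funext i
      have h1 : ∀ w : V, w ∈ Finset.univ → w ∉ Xᶜ →
          adjM G i.1 w * (x : V → ℝ) w = 0 := by
        intro w _ hw
        rw [Finset.mem_compl, not_not] at hw
        rw [hx' w hw, mul_zero]
      have h2 : ∑ w : V, adjM G i.1 w * (x : V → ℝ) w
          = ∑ w ∈ Xᶜ, adjM G i.1 w * (x : V → ℝ) w :=
        (Finset.sum_subset (Finset.subset_univ _) h1).symm
      have h3 : ∑ w ∈ Xᶜ, adjM G i.1 w * (x : V → ℝ) w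
          = ∑ j : {u : V // u ∉ X}, adjM G i.1 j.1 * (x : V → ℝ) j.1 :=
        Finset.sum_subtype _ (fun u => Finset.mem_compl) _
      have h4 := congrFun heig i.1
      simp only [Matrix.mulVec, dotProduct, Pi.smul_apply, smul_eq_mul] at h4 ⊢
      simp only [Matrix.of_apply]
      rw [← h3, ← h2, h4]
    ext u
    by_cases hu : u ∈ X
    · exact hx' u hu
    · exact congrFun hzero ⟨u, hu⟩
  have hfin : Module.finrank ℝ K = Module.finrank ℝ ({u : V // u ∈ X} → ℝ) := by
    rw [Module.finrank_fintype_fun_eq_card, Fintype.card_coe]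
    exact hX.2.1
  have hsurj : Function.Surjective r :=
    (LinearMap.injective_iff_surjective_of_finrank_eq_finrank hfin).mp hinj
  obtain ⟨x, hxval⟩ := hsurj (Pi.single ⟨v, hv⟩ 1)
  have hxv : (x : V → ℝ) v = 1 := by
    have := congrFun hxval ⟨v, hv⟩
    simpa [r] using this
  have hxw : ∀ w ∈ X, w ≠ v → (x : V → ℝ) w = 0 := by
    intro w hw hwv
    have := congrFun hxval ⟨w, hw⟩
    simpa [r, Pi.single_apply, hwv] using this
  have heig := congrFun ((hmem x).mp x.2) v
  simp only [Matrix.mulVec, dotProduct, Pi.smul_apply, smul_eq_mul] at heig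
  have hterms : ∀ w : V, adjM G v w * (x : V → ℝ) w = 0 := by
    intro w
    by_cases hw : w ∈ X
    · by_cases hwv : w = v
      · subst hwv
        rw [hadj, if_neg (G.irrefl), zero_mul]
      · rw [hxw w hw hwv, mul_zero]
    · have : ¬ G.Adj v w := hcon w (Finset.mem_compl.mpr hw)
      rw [hadj, if_neg this, zero_mul]
  rw [Finset.sum_congr rfl (fun w _ => hterms w), Finset.sum_const_zero, hxv, mul_one] at heig
  exact hlam heig.symm
end

section
/- Let G be a connected graph of order n with G ≠ K_n, and let λ be an adjacency eigenvalue of G with multiplicity m_G(λ). Then the total domination number satisfies γ_t(G) ≤ n − m_G(λ). -/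
open Matrix SimpleGraph

variable {V : Type*} [Fintype V] [DecidableEq V]

set_option linter.unusedSectionVars false

/-! ### Auxiliary linear algebra -/

def IndepOn (M : Matrix V V ℝ) (S : Finset V) : Prop :=
  ∀ g : V → ℝ, (∀ t ∉ S, g t = 0) → M.mulVec g = 0 → g = 0

lemma mulVec_eq_sum (M : Matrix V V ℝ) (g : V → ℝ) :
    M.mulVec g = ∑ t : V, g t • Mᵀ t := by
  funext i
  simp only [Matrix.mulVec, dotProduct, Finset.sum_apply, Pi.smul_apply,
    Matrix.transpose_apply, smul_eq_mul]
  exact Finset.sum_congr rfl fun t _ => mul_comm _ _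

lemma sum_supported {S : Finset V} {g : V → ℝ} (hg : ∀ t ∉ S, g t = 0)
    {W : Type*} [AddCommMonoid W] [Module ℝ W] (F : V → W) :
    ∑ t : V, g t • F t = ∑ t ∈ S, g t • F t :=
  (Finset.sum_subset (Finset.subset_univ S) (fun t _ ht => by rw [hg t ht, zero_smul])).symm

lemma mulVec_dite (M : Matrix V V ℝ) (S : Finset V) (c : {x // x ∈ S} → ℝ) :
    M.mulVec (fun t => if ht : t ∈ S then c ⟨t, ht⟩ else 0) = ∑ s : {x // x ∈ S}, c s • Mᵀ s.1 := by
  rw [_root_.mulVec_eq_sum, sum_supported (g := fun t => if ht : t ∈ S then c ⟨t, ht⟩ else 0) (fun t ht => dif_neg ht) (fun t => Mᵀ t),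
    ← Finset.sum_coe_sort S (fun t => (if ht : t ∈ S then c ⟨t, ht⟩ else 0) • Mᵀ t)]
  exact Finset.sum_congr rfl fun s _ => by rw [dif_pos s.2]

lemma indepOn_of_li {M : Matrix V V ℝ} {S : Finset V}
    (h : LinearIndependent ℝ (fun s : {x // x ∈ S} => Mᵀ s.1)) : IndepOn M S := by
  classical
  intro g hsupp hmg
  have hrepr : M.mulVec (fun t => if ht : t ∈ S then g t else 0)
      = ∑ s : {x // x ∈ S}, g s.1 • Mᵀ s.1 := mulVec_dite M S (fun s => g s.1)
  have hgeq : (fun t => if ht : t ∈ S then g t else 0) = g := by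
    funext t
    by_cases ht : t ∈ S <;> simp [ht, hsupp]
  rw [hgeq, hmg] at hrepr
  have := Fintype.linearIndependent_iff.mp h (fun s => g s.1) hrepr.symm
  funext t
  by_cases ht : t ∈ S
  · exact this ⟨t, ht⟩
  · exact hsupp t ht

lemma li_of_indepOn {M : Matrix V V ℝ} {S : Finset V} (h : IndepOn M S) :
    LinearIndependent ℝ (fun s : {x // x ∈ S} => Mᵀ s.1) := by
  classical
  rw [Fintype.linearIndependent_iff]
  intro c hc s
  have hg0 : (fun t => if ht : t ∈ S then c ⟨t, ht⟩ else 0) = (0 : V → ℝ) := by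
    apply h _ (fun t ht => dif_neg ht)
    rw [mulVec_dite, hc]
  have := congrFun hg0 s.1
  simpa [s.2] using this

lemma col_mem_range (M : Matrix V V ℝ) (v : V) :
    Mᵀ v ∈ LinearMap.range M.mulVecLin := by
  rw [Matrix.range_mulVecLin]
  exact Submodule.subset_span ⟨v, rfl⟩

lemma exists_rep {M : Matrix V V ℝ} {S : Finset V}
    (hcard : S.card + Module.finrank ℝ (LinearMap.ker M.mulVecLin) = Fintype.card V)
    (hind : IndepOn M S) (v : V) :
    ∃ a : V → ℝ, (∀ t ∉ S, a t = 0) ∧ M.mulVec a = Mᵀ v := by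
  classical
  have hli := li_of_indepOn hind
  have hrn : Module.finrank ℝ (LinearMap.range M.mulVecLin)
      + Module.finrank ℝ (LinearMap.ker M.mulVecLin) = Fintype.card V := by
    rw [← Module.finrank_fintype_fun_eq_card (η := V) (R := ℝ)]
    exact LinearMap.finrank_range_add_finrank_ker _
  have hspan : Submodule.span ℝ (Set.range (fun s : {x // x ∈ S} => Mᵀ s.1))
      = LinearMap.range M.mulVecLin := by
    apply Submodule.eq_of_le_of_finrank_le
    · rw [Submodule.span_le]
      rintro _ ⟨s, rfl⟩
      exact col_mem_range M s.1
    · rw [finrank_span_eq_card hli, Fintype.card_coe]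
      omega
  have hv : Mᵀ v ∈ Submodule.span ℝ (Set.range (fun s : {x // x ∈ S} => Mᵀ s.1)) := by
    rw [hspan]; exact col_mem_range M v
  obtain ⟨c, hc⟩ := Submodule.mem_span_range_iff_exists_fun ℝ |>.mp hv
  exact ⟨fun t => if ht : t ∈ S then c ⟨t, ht⟩ else 0, fun t ht => dif_neg ht,
    by rw [mulVec_dite, hc]⟩

lemma rows_vanish {M : Matrix V V ℝ} (hsym : ∀ i j, M i j = M j i) {S : Finset V}
    (hcard : S.card + Module.finrank ℝ (LinearMap.ker M.mulVecLin) = Fintype.card V)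
    (hind : IndepOn M S) (w : V → ℝ) (hsupp : ∀ t ∉ S, w t = 0)
    (hrows : ∀ s ∈ S, M.mulVec w s = 0) : w = 0 := by
  have hMw : M.mulVec w = 0 := by
    funext v
    obtain ⟨a, hasupp, ha⟩ := exists_rep hcard hind v
    have e1 : M.mulVec w v = ∑ t : V, M.mulVec a t * w t := by
      rw [ha]
      simp only [Matrix.mulVec, dotProduct, Matrix.transpose_apply]
      exact Finset.sum_congr rfl fun t _ => by rw [hsym]
    have e2 : ∑ t : V, M.mulVec a t * w t = ∑ i : V, a i * M.mulVec w i := by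
      simp only [Matrix.mulVec, dotProduct, Finset.sum_mul, Finset.mul_sum]
      rw [Finset.sum_comm]
      exact Finset.sum_congr rfl fun i _ => Finset.sum_congr rfl fun t _ => by rw [hsym]; ring
    have e3 : ∑ i : V, a i * M.mulVec w i = 0 := by
      rw [← Finset.sum_subset (Finset.subset_univ S)
        (fun t _ ht => by rw [hasupp t ht, zero_mul])]
      exact Finset.sum_eq_zero fun i hi => by rw [hrows i hi, mul_zero]
    rw [e1, e2, e3]
    rfl
  exact hind w hsupp hMw

lemma exists_ker_ext {M : Matrix V V ℝ} (hsym : ∀ i j, M i j = M j i) {S : Finset V}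
    (hcard : S.card + Module.finrank ℝ (LinearMap.ker M.mulVecLin) = Fintype.card V)
    (hind : IndepOn M S) (u : V → ℝ) :
    ∃ r : V → ℝ, M.mulVec r = 0 ∧ ∀ y ∉ S, r y = u y := by
  classical
  set K := LinearMap.ker M.mulVecLin with hK
  let ψ : K →ₗ[ℝ] ({y : V // y ∉ S} → ℝ) :=
    (LinearMap.funLeft ℝ ℝ Subtype.val) ∘ₗ K.subtype
  have hinj : Function.Injective ψ := by
    rw [← LinearMap.ker_eq_bot, LinearMap.ker_eq_bot']
    intro r hr
    have hsupp : ∀ t ∉ S, (r : V → ℝ) t = 0 := fun t ht => congrFun hr ⟨t, ht⟩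
    have hker : M.mulVec (r : V → ℝ) = 0 := r.2
    exact Subtype.ext (rows_vanish hsym hcard hind _ hsupp (fun s _ => congrFun hker s))
  have hfr : Module.finrank ℝ K = Module.finrank ℝ ({y : V // y ∉ S} → ℝ) := by
    rw [Module.finrank_fintype_fun_eq_card]
    have h1 : Fintype.card {y : V // y ∉ S} = Fintype.card V - Fintype.card {y : V // y ∈ S} :=
      Fintype.card_subtype_compl _
    rw [h1, Fintype.card_coe]
    omega
  have hsurj := (LinearMap.injective_iff_surjective_of_finrank_eq_finrank hfr).mp hinj
  obtain ⟨r, hr⟩ := hsurj (fun y => u y.1)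
  exact ⟨r.1, r.2, fun y hy => congrFun hr ⟨y, hy⟩⟩

lemma exists_goodS (M : Matrix V V ℝ) :
    ∃ S : Finset V,
      S.card + Module.finrank ℝ (LinearMap.ker M.mulVecLin) = Fintype.card V ∧ IndepOn M S := by
  classical
  obtain ⟨b, hbsub, hbspan, hbli⟩ := exists_linearIndependent ℝ (Set.range Mᵀ)
  have hfin : b.Finite := (Set.finite_range Mᵀ).subset hbsub
  haveI := hfin.fintype
  choose f hf using fun y : b => hbsub y.2
  have hfinj : Function.Injective f := fun y₁ y₂ h =>
    Subtype.ext (by rw [← hf y₁, ← hf y₂, h])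
  set S : Finset V := Finset.univ.image f with hS
  have hcardS : S.card = Fintype.card b := by
    rw [hS, Finset.card_image_of_injective _ hfinj, Finset.card_univ]
  have hmem : ∀ s ∈ S, Mᵀ s ∈ b := by
    intro s hs
    rw [hS] at hs
    obtain ⟨y, _, rfl⟩ := Finset.mem_image.mp hs
    rw [hf y]; exact y.2
  have hli : LinearIndependent ℝ (fun s : {x // x ∈ S} => Mᵀ s.1) := by
    let e : {x // x ∈ S} → b := fun s => ⟨Mᵀ s.1, hmem s.1 s.2⟩
    have hfe : ∀ s : {x // x ∈ S}, f (e s) = s.1 := by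
      intro s
      have hs' : s.1 ∈ Finset.univ.image f := by rw [← hS]; exact s.2
      obtain ⟨y, _, hy⟩ := Finset.mem_image.mp hs'
      have hey : e s = y := Subtype.ext (by show Mᵀ s.1 = (y : V → ℝ); rw [← hy, hf])
      rw [hey, hy]
    have heinj : Function.Injective e := fun s₁ s₂ h =>
      Subtype.ext (by rw [← hfe s₁, ← hfe s₂, h])
    exact hbli.comp e heinj
  refine ⟨S, ?_, indepOn_of_li hli⟩
  have h1 : S.card = Module.finrank ℝ (LinearMap.range M.mulVecLin) := by
    rw [Matrix.range_mulVecLin, show M.col = Mᵀ from rfl, ← hbspan, hcardS, finrank_span_set_eq_card hbli,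
      Set.toFinset_card]
  have h2 : Module.finrank ℝ (LinearMap.range M.mulVecLin)
      + Module.finrank ℝ (LinearMap.ker M.mulVecLin) = Fintype.card V := by
    rw [← Module.finrank_fintype_fun_eq_card (η := V) (R := ℝ)]
    exact LinearMap.finrank_range_add_finrank_ker _
  omega

/-! ### Graph-side facts -/

lemma M_diag (G : SimpleGraph V) (lam : ℝ) (i : V) : (adjM G - lam • 1) i i = -lam := by
  letI := Classical.decRel G.Adj
  simp [adjM, Matrix.sub_apply, Matrix.smul_apply, Matrix.one_apply]

lemma M_adj (G : SimpleGraph V) (lam : ℝ) {i j : V} (h : G.Adj i j) :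
    (adjM G - lam • 1) i j = 1 := by
  letI := Classical.decRel G.Adj
  simp [adjM, Matrix.sub_apply, Matrix.smul_apply, Matrix.one_apply, h, G.ne_of_adj h]

lemma M_nadj (G : SimpleGraph V) (lam : ℝ) {i j : V} (hne : i ≠ j) (h : ¬G.Adj i j) :
    (adjM G - lam • 1) i j = 0 := by
  letI := Classical.decRel G.Adj
  simp [adjM, Matrix.sub_apply, Matrix.smul_apply, Matrix.one_apply, h, hne]

lemma M_symm (G : SimpleGraph V) (lam : ℝ) :
    ∀ i j, (adjM G - lam • 1) i j = (adjM G - lam • 1) j i := by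
  intro i j
  by_cases hij : i = j
  · subst hij; rfl
  by_cases h : G.Adj i j
  · rw [M_adj G lam h, M_adj G lam h.symm]
  · rw [M_nadj G lam hij h, M_nadj G lam (Ne.symm hij) fun h' => h h'.symm]

lemma eigMult_eq (G : SimpleGraph V) (lam : ℝ) :
    eigMult G lam
      = Module.finrank ℝ (LinearMap.ker (adjM G - lam • (1 : Matrix V V ℝ)).mulVecLin) := by
  unfold eigMult
  congr 1

lemma one_lt_card_of_ne_top {G : SimpleGraph V} (hne : G ≠ ⊤) : 1 < Fintype.card V := by
  by_contra h
  push_neg at h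
  haveI : Subsingleton V := Fintype.card_le_one_iff_subsingleton.mp h
  refine hne ?_
  ext a b
  rw [SimpleGraph.top_adj]
  constructor
  · exact fun h => h.ne
  · exact fun h => absurd (Subsingleton.elim a b) h

lemma exists_adj {G : SimpleGraph V} (hG : G.Connected) (h2 : 1 < Fintype.card V) (x : V) :
    ∃ y, G.Adj x y := by
  obtain ⟨y, hy⟩ := Fintype.exists_ne_of_one_lt_card h2 x
  obtain ⟨p⟩ := hG.preconnected x y
  cases p with
  | nil => exact absurd rfl hy
  | cons h _ => exact ⟨_, h⟩

lemma mem_of_walk {G : SimpleGraph V} {C : Set V}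
    (hcl : ∀ a ∈ C, ∀ y, G.Adj a y → y ∈ C) :
    ∀ {a u : V}, G.Walk a u → a ∈ C → u ∈ C
  | _, _, SimpleGraph.Walk.nil, ha => ha
  | _, _, SimpleGraph.Walk.cons h q, ha => mem_of_walk hcl q (hcl _ ha _ h)

/-- Every vertex outside a "star complement" `S` has a neighbour in `S`. -/
lemma neighbor_in_S {G : SimpleGraph V} (hG : G.Connected) (hne : G ≠ ⊤) {lam : ℝ} {S : Finset V}
    (hcard : S.card
      + Module.finrank ℝ (LinearMap.ker (adjM G - lam • (1 : Matrix V V ℝ)).mulVecLin)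
      = Fintype.card V)
    (hind : IndepOn (adjM G - lam • 1) S) {x : V} (hx : x ∉ S) :
    ∃ s ∈ S, G.Adj x s := by
  classical
  by_contra hcon
  push_neg at hcon
  set M : Matrix V V ℝ := adjM G - lam • 1 with hM
  obtain ⟨r, hrker, hrext⟩ := exists_ker_ext (M_symm G lam) hcard hind (Pi.single x 1)
  set w : V → ℝ := fun t => if t ∈ S then r t else 0 with hw
  have hwsupp : ∀ t ∉ S, w t = 0 := fun t ht => by simp [hw, ht]
  have hdiff : r - w = Pi.single x 1 := by
    funext t
    by_cases ht : t ∈ S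
    · have htx : t ≠ x := fun h => hx (h ▸ ht)
      simp [hw, ht, Pi.single_eq_of_ne htx]
    · simp [hw, ht, hrext t ht]
  have hMw : M.mulVec w = -(Mᵀ x) := by
    have : M.mulVec r - M.mulVec w = Mᵀ x := by
      rw [← Matrix.mulVec_sub, hdiff, Matrix.mulVec_single_one]; rfl
    rw [hrker] at this
    linear_combination (norm := module) -this
  have hrows : ∀ s ∈ S, M.mulVec w s = 0 := by
    intro s hs
    rw [hMw]
    have hsx : x ≠ s := fun h => hx (h ▸ hs)
    show -(M s x) = 0
    rw [hM, M_symm G lam s x, M_nadj G lam hsx (hcon s hs), neg_zero]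
  have hw0 : w = 0 := rows_vanish (M_symm G lam) hcard hind w hwsupp hrows
  have hr : r = Pi.single x 1 := by rw [← hdiff, hw0, sub_zero]
  have hcol : Mᵀ x = 0 := by rw [show Mᵀ x = M.col x from rfl, ← Matrix.mulVec_single_one, ← hr, hrker]
  obtain ⟨y, hy⟩ := exists_adj hG (one_lt_card_of_ne_top hne) x
  have : M y x = 1 := M_adj G lam hy.symm
  rw [show M y x = Mᵀ x y from rfl, hcol] at this
  simpa using this

/-! ### The stuck case -/

lemma stuck_key {G : SimpleGraph V} {lam : ℝ} {S : Finset V}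
    (hcard : S.card
      + Module.finrank ℝ (LinearMap.ker (adjM G - lam • (1 : Matrix V V ℝ)).mulVecLin)
      = Fintype.card V)
    (hind : IndepOn (adjM G - lam • 1) S) {v x : V} (hv : v ∈ S)
    (hbad : ∀ s ∈ S, ¬ G.Adj v s) (hvx : G.Adj v x)
    (hstuck : ∀ s ∈ S, s ≠ v → ¬ G.Adj x s) (hlam : lam ≠ 0) :
    lam * lam = 1 ∧ ∀ y : V,
      (adjM G - lam • 1) y x + (1/lam) * (adjM G - lam • 1) y v = 0 := by
  classical
  have hxS : x ∉ S := fun h => hbad x h hvx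
  obtain ⟨r, hrker, hrext⟩ := exists_ker_ext (M_symm G lam) hcard hind (Pi.single x 1)
  set w : V → ℝ := fun t => if t ∈ S then r t else 0 with hw
  have hwsupp : ∀ t ∉ S, w t = 0 := fun t ht => by simp [hw, ht]
  have hdiff : r - w = Pi.single x 1 := by
    funext t
    by_cases ht : t ∈ S
    · have htx : t ≠ x := fun h => hxS (h ▸ ht)
      simp [hw, ht, Pi.single_eq_of_ne htx]
    · simp [hw, ht, hrext t ht]
  have hMw : (adjM G - lam • 1).mulVec w = -((adjM G - lam • 1)ᵀ x) := by
    have h1 : (adjM G - lam • 1).mulVec r - (adjM G - lam • 1).mulVec w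
        = (adjM G - lam • 1)ᵀ x := by
      rw [← Matrix.mulVec_sub, hdiff, Matrix.mulVec_single_one]; rfl
    rw [hrker] at h1
    linear_combination (norm := module) -h1
  set w₀ : V → ℝ := Pi.single v (1/lam) with hw₀
  have hMw₀ : (adjM G - lam • 1).mulVec w₀ = fun i => (adjM G - lam • 1) i v * (1/lam) := by
    funext i
    simp [hw₀, Matrix.mulVec, dotProduct, Pi.single_apply, mul_ite, Finset.sum_ite_eq']
  have hsupp1 : ∀ t ∉ S, (w - w₀) t = 0 := by
    intro t ht
    have htv : t ≠ v := fun h => ht (h ▸ hv)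
    simp [hwsupp t ht, hw₀, Pi.single_eq_of_ne htv]
  have hrows : ∀ s ∈ S, (adjM G - lam • 1).mulVec (w - w₀) s = 0 := by
    intro s hs
    rw [Matrix.mulVec_sub, Pi.sub_apply]
    have e1 : (adjM G - lam • 1).mulVec w s = -((adjM G - lam • 1) s x) := by rw [hMw]; rfl
    have e2 : (adjM G - lam • 1).mulVec w₀ s = (adjM G - lam • 1) s v * (1/lam) := by
      rw [hMw₀]
    rw [e1, e2]
    by_cases hsv : s = v
    · subst hsv
      rw [M_adj G lam hvx, M_diag G lam]
      field_simp; norm_num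
    · have hsx : s ≠ x := fun h => hxS (h ▸ hs)
      rw [M_nadj G lam hsx (fun h => hstuck s hs hsv h.symm),
        M_nadj G lam hsv (fun h => hbad s hs h.symm)]
      ring
  have hww₀ : w - w₀ = 0 := rows_vanish (M_symm G lam) hcard hind _ hsupp1 hrows
  have hweq : w = w₀ := by
    have := sub_eq_zero.mp hww₀
    exact this
  have hall : ∀ y : V,
      (adjM G - lam • 1) y x + (1/lam) * (adjM G - lam • 1) y v = 0 := by
    intro y
    have h2 : (fun i => (adjM G - lam • 1) i v * (1/lam)) y = (-((adjM G - lam • 1)ᵀ x)) y := by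
      rw [← hMw₀, ← hweq, hMw]
    have h3 : (adjM G - lam • 1) y v * (1/lam) = -((adjM G - lam • 1) y x) := by
      simpa only [Pi.neg_apply, Matrix.transpose_apply] using h2
    linarith [h3]
  refine ⟨?_, hall⟩
  have hx := hall x
  rw [M_diag G lam, M_adj G lam hvx.symm] at hx
  field_simp at hx
  linarith [hx]

lemma stuck_false {G : SimpleGraph V} (hG : G.Connected) (hne : G ≠ ⊤) {lam : ℝ} {S : Finset V}
    (hcard : S.card
      + Module.finrank ℝ (LinearMap.ker (adjM G - lam • (1 : Matrix V V ℝ)).mulVecLin)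
      = Fintype.card V)
    (hind : IndepOn (adjM G - lam • 1) S) {v : V} (hv : v ∈ S)
    (hbad : ∀ s ∈ S, ¬ G.Adj v s)
    (hstuck : ∀ x, G.Adj v x → ∀ s ∈ S, s ≠ v → ¬ G.Adj x s) : False := by
  classical
  have hlam : lam ≠ 0 := by
    intro h0
    have hsupp : ∀ t ∉ S, (Pi.single v 1 : V → ℝ) t = 0 := by
      intro t ht
      have htv : t ≠ v := fun hh => ht (by rw [hh]; exact hv)
      simp [Pi.single_eq_of_ne htv]
    have hrows : ∀ s ∈ S, (adjM G - lam • 1).mulVec (Pi.single v 1 : V → ℝ) s = 0 := by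
      intro s hs
      have he : (adjM G - lam • 1).mulVec (Pi.single v 1 : V → ℝ) s = (adjM G - lam • 1) s v := by
        simp [Matrix.mulVec, dotProduct, Pi.single_apply, mul_ite, Finset.sum_ite_eq']
      rw [he]
      by_cases hsv : s = v
      · subst hsv; rw [M_diag G lam, h0, neg_zero]
      · exact M_nadj G lam hsv (fun h => hbad s hs h.symm)
    have h1 := rows_vanish (M_symm G lam) hcard hind _ hsupp hrows
    have h2 := congrFun h1 v
    simp at h2
  obtain ⟨x₀, hvx₀⟩ := exists_adj hG (one_lt_card_of_ne_top hne) v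
  obtain ⟨hsq, hall₀⟩ := stuck_key hcard hind hv hbad hvx₀ (hstuck x₀ hvx₀) hlam
  rcases mul_self_eq_one_iff.mp hsq with h1 | h1
  · -- lam = 1 : the component of v is {v, x₀}
    have hzero : ∀ y, y ≠ x₀ → y ≠ v → ¬G.Adj y x₀ ∧ ¬G.Adj y v := by
      intro y hyx hyv
      have h := hall₀ y
      have hdiv : (1:ℝ)/lam = 1 := by rw [h1]; norm_num
      rw [hdiv, one_mul] at h
      have hx' : (0:ℝ) ≤ (adjM G - lam • 1) y x₀ := by
        by_cases hA : G.Adj y x₀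
        · rw [M_adj G lam hA]; norm_num
        · rw [M_nadj G lam hyx hA]
      have hv' : (0:ℝ) ≤ (adjM G - lam • 1) y v := by
        by_cases hA : G.Adj y v
        · rw [M_adj G lam hA]; norm_num
        · rw [M_nadj G lam hyv hA]
      constructor
      · intro hA
        rw [M_adj G lam hA] at h
        linarith
      · intro hA
        rw [M_adj G lam hA] at h
        linarith
    have hcl : ∀ a ∈ ({v, x₀} : Set V), ∀ y, G.Adj a y → y ∈ ({v, x₀} : Set V) := by
      rintro a ha y hay
      by_contra hyC
      simp only [Set.mem_insert_iff, Set.mem_singleton_iff] at hyC ha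
      push_neg at hyC
      obtain ⟨hyv, hyx⟩ := hyC
      obtain ⟨hnx, hnv⟩ := hzero y hyx hyv
      rcases ha with rfl | rfl
      · exact hnv hay.symm
      · exact hnx hay.symm
    have hallmem : ∀ u : V, u ∈ ({v, x₀} : Set V) := by
      intro u
      obtain ⟨p⟩ := hG.preconnected v u
      exact mem_of_walk hcl p (by simp)
    refine hne ?_
    ext a b
    rw [SimpleGraph.top_adj]
    constructor
    · exact fun h => h.ne
    · intro hab
      have ha := hallmem a
      have hb := hallmem b
      simp only [Set.mem_insert_iff, Set.mem_singleton_iff] at ha hb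
      rcases ha with rfl | rfl <;> rcases hb with rfl | rfl
      · exact absurd rfl hab
      · exact hvx₀
      · exact hvx₀.symm
      · exact absurd rfl hab
  · -- lam = -1 : N[v] is a clique and a component
    have twin : ∀ x, G.Adj v x → ∀ y, y ≠ x → y ≠ v → (G.Adj y x ↔ G.Adj y v) := by
      intro x hvx y hyx hyv
      obtain ⟨-, hall⟩ := stuck_key hcard hind hv hbad hvx (hstuck x hvx) hlam
      have h := hall y
      have hdiv : (1:ℝ)/lam = -1 := by rw [h1]; norm_num
      rw [hdiv] at h
      constructor
      · intro hA
        by_contra hB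
        rw [M_adj G lam hA, M_nadj G lam hyv hB] at h
        norm_num at h
      · intro hA
        by_contra hB
        rw [M_adj G lam hA, M_nadj G lam hyx hB] at h
        norm_num at h
    have hcl : ∀ a ∈ {y : V | y = v ∨ G.Adj v y}, ∀ y, G.Adj a y →
        y ∈ {y : V | y = v ∨ G.Adj v y} := by
      rintro a (rfl | hva) y hay
      · exact Or.inr hay
      · by_cases hyv : y = v
        · exact Or.inl hyv
        · have hya : y ≠ a := hay.ne'
          exact Or.inr ((twin a hva y hya hyv).mp hay.symm).symm
    have hallmem : ∀ u : V, u ∈ {y : V | y = v ∨ G.Adj v y} := by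
      intro u
      obtain ⟨p⟩ := hG.preconnected v u
      exact mem_of_walk hcl p (Or.inl rfl)
    refine hne ?_
    ext a b
    rw [SimpleGraph.top_adj]
    constructor
    · exact fun h => h.ne
    · intro hab
      rcases hallmem a with rfl | hva
      · rcases hallmem b with rfl | hvb
        · exact absurd rfl hab
        · exact hvb
      · rcases hallmem b with rfl | hvb
        · exact hva.symm
        · exact (twin b hvb a hab hva.ne').mpr hva.symm

/-! ### Main construction -/

lemma exists_TDS (G : SimpleGraph V) (hG : G.Connected) (hne : G ≠ ⊤) (lam : ℝ) :
    ∃ D : Finset V, IsTotalDomSet G D ∧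
      D.card + Module.finrank ℝ (LinearMap.ker (adjM G - lam • (1 : Matrix V V ℝ)).mulVecLin)
        = Fintype.card V := by
  classical
  obtain ⟨S₀, hc₀, hi₀⟩ := exists_goodS (adjM G - lam • 1)
  suffices H : ∀ (k : ℕ) (S : Finset V),
      S.card + Module.finrank ℝ (LinearMap.ker (adjM G - lam • (1 : Matrix V V ℝ)).mulVecLin)
        = Fintype.card V →
      IndepOn (adjM G - lam • 1) S →
      (S.filter (fun u => ∀ s ∈ S, ¬ G.Adj u s)).card ≤ k →
      ∃ D : Finset V, IsTotalDomSet G D ∧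
        D.card + Module.finrank ℝ (LinearMap.ker (adjM G - lam • (1 : Matrix V V ℝ)).mulVecLin)
          = Fintype.card V by
    exact H _ S₀ hc₀ hi₀ le_rfl
  intro k
  induction k with
  | zero =>
    intro S hc hi hb
    refine ⟨S, ?_, hc⟩
    have hempty : S.filter (fun u => ∀ s ∈ S, ¬ G.Adj u s) = ∅ :=
      Finset.card_eq_zero.mp (Nat.le_zero.mp hb)
    intro y
    by_cases hy : y ∈ S
    · by_contra hcon
      push_neg at hcon
      have hmem : y ∈ S.filter (fun u => ∀ s ∈ S, ¬ G.Adj u s) :=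
        Finset.mem_filter.mpr ⟨hy, fun s hs => hcon s hs⟩
      rw [hempty] at hmem
      exact absurd hmem (Finset.notMem_empty y)
    · exact neighbor_in_S hG hne hc hi hy
  | succ k ih =>
    intro S hc hi hb
    by_cases hble : (S.filter (fun u => ∀ s ∈ S, ¬ G.Adj u s)).card ≤ k
    · exact ih S hc hi hble
    have hpos : 0 < (S.filter (fun u => ∀ s ∈ S, ¬ G.Adj u s)).card := by omega
    obtain ⟨v, hvf⟩ := Finset.card_pos.mp hpos
    have hvS : v ∈ S := (Finset.mem_filter.mp hvf).1
    have hbadv : ∀ s ∈ S, ¬ G.Adj v s := (Finset.mem_filter.mp hvf).2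
    by_cases hstuck : ∀ x, G.Adj v x → ∀ s ∈ S, s ≠ v → ¬ G.Adj x s
    · exact (stuck_false hG hne hc hi hvS hbadv hstuck).elim
    push_neg at hstuck
    obtain ⟨x, hvx, s₁, hs₁S, hs₁v, hxs₁⟩ := hstuck
    have hxS : x ∉ S := fun h => hbadv x h hvx
    set S' : Finset V := insert x (S.erase v) with hS'
    have hcardS' : S'.card = S.card := by
      rw [hS', Finset.card_insert_of_notMem (fun h => hxS (Finset.mem_of_mem_erase h)),
        Finset.card_erase_of_mem hvS]
      have hp : 0 < S.card := Finset.card_pos.mpr ⟨v, hvS⟩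
      omega
    have hi' : IndepOn (adjM G - lam • 1) S' := by
      intro g hsupp hmg
      have hgx : g x = 0 := by
        have h0 : (adjM G - lam • 1).mulVec g v = 0 := congrFun hmg v
        have hsum : (adjM G - lam • 1).mulVec g v = (adjM G - lam • 1) v x * g x := by
          show ∑ t : V, (adjM G - lam • 1) v t * g t = _
          apply Finset.sum_eq_single_of_mem x (Finset.mem_univ x)
          intro t _ htx
          by_cases htS' : t ∈ S'
          · have htS : t ∈ S.erase v := by
              rcases Finset.mem_insert.mp (by rw [← hS']; exact htS') with h | h
              · exact absurd h htx
              · exact h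
            have htv : t ≠ v := (Finset.mem_erase.mp htS).1
            rw [M_nadj G lam (Ne.symm htv) (hbadv t (Finset.mem_of_mem_erase htS)), zero_mul]
          · rw [hsupp t htS', mul_zero]
        rw [hsum, M_adj G lam hvx] at h0
        linarith [h0]
      apply hi g
      · intro t htS
        by_cases htx : t = x
        · exact htx ▸ hgx
        · apply hsupp
          rw [hS']
          intro hmem
          rcases Finset.mem_insert.mp hmem with h | h
          · exact htx h
          · exact htS (Finset.mem_of_mem_erase h)
      · exact hmg
    have hb' : (S'.filter (fun u => ∀ s ∈ S', ¬ G.Adj u s)).card ≤ k := by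
      have hsub : S'.filter (fun u => ∀ s ∈ S', ¬ G.Adj u s)
          ⊆ (S.filter (fun u => ∀ s ∈ S, ¬ G.Adj u s)).erase v := by
        intro u hu
        obtain ⟨huS', hbu⟩ := Finset.mem_filter.mp hu
        have hux : u ≠ x := by
          intro h
          subst h
          have hs₁S' : s₁ ∈ S' := by
            rw [hS']
            exact Finset.mem_insert_of_mem (Finset.mem_erase.mpr ⟨hs₁v, hs₁S⟩)
          exact hbu s₁ hs₁S' hxs₁
        have huSe : u ∈ S.erase v := by
          rcases Finset.mem_insert.mp (by rw [← hS']; exact huS') with h | h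
          · exact absurd h hux
          · exact h
        refine Finset.mem_erase.mpr ⟨(Finset.mem_erase.mp huSe).1,
          Finset.mem_filter.mpr ⟨Finset.mem_of_mem_erase huSe, ?_⟩⟩
        intro s hsS
        by_cases hsv : s = v
        · subst hsv
          exact fun h => hbadv u (Finset.mem_of_mem_erase huSe) h.symm
        · refine hbu s ?_
          rw [hS']
          exact Finset.mem_insert_of_mem (Finset.mem_erase.mpr ⟨hsv, hsS⟩)
      have h1 := Finset.card_le_card hsub
      rw [Finset.card_erase_of_mem hvf] at h1
      omega
    exact ih S' (by rw [hcardS']; exact hc) hi' hb'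

theorem stmt_2 (G : SimpleGraph V) (hG : G.Connected) (hne : G ≠ ⊤) (lam : ℝ)
    (heig : 0 < eigMult G lam) :
    totalDomNum G ≤ Fintype.card V - eigMult G lam := by
  obtain ⟨D, hD, hcard⟩ := exists_TDS G hG hne lam
  have hm := eigMult_eq G lam
  have hDcard : D.card = Fintype.card V - eigMult G lam := by omega
  exact Nat.sInf_le ⟨D, hD, hDcard⟩
end

section
/- If B and C are symmetric 0-1 matrices of the same size γ ≥ 2 with zero diagonal, B is the adjacency matrix of a connected graph, and (B + I)(C + I) = I, then a contradiction follows; i.e., no such pair exists with γ ≥ 2. -/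
open Matrix SimpleGraph

variable {V : Type*} [Fintype V] [DecidableEq V]

theorem stmt_4 (γ : ℕ) (hγ : 2 ≤ γ) (B C : Matrix (Fin γ) (Fin γ) ℝ)
    (hB : B.IsAdjMatrix) (hC : C.IsAdjMatrix) (hconn : hB.toGraph.Connected)
    (h : (B + 1) * (C + 1) = 1) : False := by
  have hBnn : ∀ i j, 0 ≤ B i j := fun i j => by
    rcases hB.zero_or_one i j with h1 | h1 <;> rw [h1] <;> norm_num
  have hCnn : ∀ i j, 0 ≤ C i j := fun i j => by
    rcases hC.zero_or_one i j with h1 | h1 <;> rw [h1] <;> norm_num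
  have expand : (B + 1) * (C + 1) = B * C + B + C + 1 := by noncomm_ring
  have key : B * C + B + C + 1 = 1 := expand.symm.trans h
  have key2 : B * C + B + C = 0 := by
    have := congrArg (fun M => M - 1) key
    simpa using this
  have hB0 : B = 0 := by
    ext i j
    have hbc : 0 ≤ (B * C) i j := by
      rw [Matrix.mul_apply]
      exact Finset.sum_nonneg fun k _ => mul_nonneg (hBnn i k) (hCnn k j)
    have := congrFun (congrFun key2 i) j
    simp only [Matrix.add_apply, Matrix.zero_apply] at this ⊢
    nlinarith [hBnn i j, hCnn i j]
  have h01 : (⟨0, by omega⟩ : Fin γ) ≠ ⟨1, by omega⟩ := by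
    simp [Fin.ext_iff]
  obtain ⟨w⟩ := hconn.preconnected ⟨0, by omega⟩ ⟨1, by omega⟩
  cases w with
  | cons hadj _ =>
    have : B _ _ = 1 := hadj
    rw [hB0] at this
    simp at this
end

section
/- If B and C are adjacency matrices of graphs on γ vertices, the graph of B is connected, and BC = I, then γ = 2. -/
open Matrix SimpleGraph

variable {V : Type*} [Fintype V] [DecidableEq V]

theorem stmt_5 (γ : ℕ) (B C : Matrix (Fin γ) (Fin γ) ℝ)
    (hB : B.IsAdjMatrix) (hC : C.IsAdjMatrix) (hconn : hB.toGraph.Connected)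
    (h : B * C = 1) : γ = 2 := by
  have hB01 := hB.zero_or_one
  have hC01 := hC.zero_or_one
  have hBnn : ∀ i j, 0 ≤ B i j := fun i j => by rcases hB01 i j with h1|h1 <;> rw [h1] <;> norm_num
  have hCnn : ∀ i j, 0 ≤ C i j := fun i j => by rcases hC01 i j with h1|h1 <;> rw [h1] <;> norm_num
  have h' : C * B = 1 := mul_eq_one_comm.mp h
  have key1 : ∀ i, ∃ k, B i k = 1 ∧ C k i = 1 := by
    intro i
    have h1 : ∑ k, B i k * C k i = 1 := by
      have := congrFun (congrFun h i) i
      simpa [Matrix.mul_apply, Matrix.one_apply] using this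
    by_contra hcon
    push_neg at hcon
    have hz : ∀ k ∈ Finset.univ, B i k * C k i = 0 := by
      intro k _
      rcases hB01 i k with hb|hb
      · rw [hb]; ring
      · rcases hC01 k i with hc|hc
        · rw [hc]; ring
        · exact absurd hc (hcon k hb)
    rw [Finset.sum_eq_zero hz] at h1
    norm_num at h1
  have key1' : ∀ k, ∃ i, C k i = 1 ∧ B i k = 1 := by
    intro k
    have h1 : ∑ i, C k i * B i k = 1 := by
      have := congrFun (congrFun h' k) k
      simpa [Matrix.mul_apply, Matrix.one_apply] using this
    by_contra hcon
    push_neg at hcon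
    have hz : ∀ i ∈ Finset.univ, C k i * B i k = 0 := by
      intro i _
      rcases hC01 k i with hc|hc
      · rw [hc]; ring
      · rcases hB01 i k with hb|hb
        · rw [hb]; ring
        · exact absurd hb (hcon i hc)
    rw [Finset.sum_eq_zero hz] at h1
    norm_num at h1
  have key2 : ∀ i k j, B i k = 1 → j ≠ i → C k j = 0 := by
    intro i k j hb hj
    have h0 : ∑ m, B i m * C m j = 0 := by
      have := congrFun (congrFun h i) j
      simpa [Matrix.mul_apply, Matrix.one_apply, (Ne.symm hj)] using this
    have := (Finset.sum_eq_zero_iff_of_nonneg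
      (fun m _ => mul_nonneg (hBnn i m) (hCnn m j))).mp h0 k (Finset.mem_univ k)
    simpa [hb] using this
  have key2' : ∀ k i j, C k i = 1 → j ≠ k → B i j = 0 := by
    intro k i j hc hj
    have h0 : ∑ m, C k m * B m j = 0 := by
      have := congrFun (congrFun h' k) j
      simpa [Matrix.mul_apply, Matrix.one_apply, (Ne.symm hj)] using this
    have := (Finset.sum_eq_zero_iff_of_nonneg
      (fun m _ => mul_nonneg (hCnn k m) (hBnn m j))).mp h0 i (Finset.mem_univ i)
    simpa [hc] using this
  have hsymmBC : ∀ i k, B i k = 1 → C k i = 1 := by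
    intro i k hb
    obtain ⟨i', hci', hbi'⟩ := key1' k
    by_cases hii : i' = i
    · exact hii ▸ hci'
    · have := key2 i k i' hb hii
      rw [this] at hci'; norm_num at hci'
  have uniq : ∀ i k k', B i k = 1 → B i k' = 1 → k' = k := by
    intro i k k' hb hb'
    by_contra hne
    have hc := hsymmBC i k hb
    have := key2' k i k' hc hne
    rw [this] at hb'; norm_num at hb'
  obtain ⟨v0⟩ := hconn.nonempty
  obtain ⟨k0, hb0, -⟩ := key1 v0
  have hk0 : k0 ≠ v0 := by
    intro e
    rw [e] at hb0
    have := hB.apply_diag v0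
    rw [hb0] at this; norm_num at this
  have hBsymm : B k0 v0 = 1 := by
    have h2 := congrFun (congrFun hB.symm v0) k0
    rw [Matrix.transpose_apply] at h2
    rw [h2, hb0]
  have closure : ∀ v w, hB.toGraph.Adj v w → (v = v0 ∨ v = k0) → (w = v0 ∨ w = k0) := by
    intro v w hadj hv
    rw [hB.toGraph_adj] at hadj
    rcases hv with h1|h1
    · rw [h1] at hadj; exact Or.inr (uniq v0 k0 w hb0 hadj)
    · rw [h1] at hadj; exact Or.inl (uniq k0 v0 w hBsymm hadj)
  have allv : ∀ v : Fin γ, v = v0 ∨ v = k0 := by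
    intro v
    obtain ⟨w⟩ := hconn v0 v
    have : ∀ (u x : Fin γ), hB.toGraph.Walk u x → (u = v0 ∨ u = k0) → (x = v0 ∨ x = k0) := by
      intro u x w
      induction w with
      | nil => exact id
      | cons hadj p ih => exact fun hu => ih (closure _ _ hadj hu)
    exact this v0 v w (Or.inl rfl)
  have huniv : (Finset.univ : Finset (Fin γ)) = {v0, k0} := by
    apply Finset.eq_of_subset_of_card_le
    · intro v _
      rcases allv v with h1|h1 <;> rw [h1] <;> simp
    · exact Finset.card_le_univ _
  have : (Finset.univ : Finset (Fin γ)).card = ({v0, k0} : Finset (Fin γ)).card := by rw [huniv]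
  rw [Finset.card_univ, Fintype.card_fin] at this
  rw [this, Finset.card_insert_of_notMem (by simp [Ne.symm hk0]), Finset.card_singleton]
end

section
/- Let G be a graph of order n with minimum degree δ(G) and s distinct adjacency eigenvalues, and let p ≤ δ(G) be a positive integer with s ≥ n − δ(G) + p. If X is a star set for any eigenvalue λ of G, then V(G)\X is a p-dominating set of G. -/
open Matrix SimpleGraph

variable {V : Type*} [Fintype V] [DecidableEq V]

section Aux

open Module

lemma eigMult_eq_finrank_eigenspace (G : SimpleGraph V) (μ : ℝ) :
    eigMult G μ = Module.finrank ℝ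
      (Module.End.eigenspace (Matrix.toLin' (adjM G)) μ) := by
  have h : Matrix.toLin' (adjM G - μ • (1 : Matrix V V ℝ))
      = Matrix.toLin' (adjM G) - μ • 1 := by
    rw [map_sub, _root_.map_smul, Matrix.toLin'_one]
    rfl
  rw [eigMult, Module.End.eigenspace_def, h]

lemma mem_eigSet_iff (G : SimpleGraph V) (μ : ℝ) :
    0 < eigMult G μ ↔ Module.End.eigenspace (Matrix.toLin' (adjM G)) μ ≠ ⊥ := by
  rw [eigMult_eq_finrank_eigenspace, Nat.pos_iff_ne_zero, ne_eq, Submodule.finrank_eq_zero]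

theorem stmt_10' (G : SimpleGraph V) (p : ℕ) (hp : 0 < p) (hpδ : p ≤ minDeg G)
    (hs : Fintype.card V - minDeg G + p ≤ numEigs G)
    (lam : ℝ) (X : Finset V) (hX : IsStarSet G lam X) :
    IsPDomSet G p Xᶜ := by
  classical
  set f : Module.End ℝ (V → ℝ) := Matrix.toLin' (adjM G) with hf
  have hind := Module.End.eigenspaces_iSupIndep f
  set E : Set ℝ := {μ | 0 < eigMult G μ} with hE
  have hEeq : E = {μ | f.eigenspace μ ≠ ⊥} := by
    ext μ; exact mem_eigSet_iff G μ
  -- finiteness of E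
  haveI := hind.fintypeNeBotOfFiniteDimensional
  have hEfin : E.Finite := by
    rw [hEeq]
    have hfin : Finite {μ : ℝ // f.eigenspace μ ≠ ⊥} := Finite.of_fintype _
    exact Set.finite_coe_iff.mp hfin
  have hlam : lam ∈ E := hX.1
  have hm : Module.finrank ℝ (f.eigenspace lam) = X.card := by
    rw [← eigMult_eq_finrank_eigenspace]; exact hX.2.1
  -- bound : X.card + (E.ncard - 1) ≤ card V
  set S : Set ℝ := E \ {lam} with hS
  have hSfin : S.Finite := hEfin.diff
  haveI : Fintype S := hSfin.fintype
  set B : Submodule ℝ (V → ℝ) := ⨆ μ ∈ S, f.eigenspace μ with hB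
  have hdisj : Disjoint (f.eigenspace lam) B :=
    hind.disjoint_biSup (by simp [hS])
  -- S.ncard ≤ finrank B
  have hv : ∀ μ : S, ∃ x ∈ f.eigenspace (μ : ℝ), x ≠ 0 := by
    intro μ
    have : f.eigenspace (μ : ℝ) ≠ ⊥ := by
      have := μ.2.1
      rwa [hEeq] at this
    rw [Submodule.ne_bot_iff] at this
    exact this
  choose v hv1 hv2 using hv
  have hvB : ∀ μ : S, v μ ∈ B := fun μ =>
    (le_biSup (fun μ => f.eigenspace μ) μ.2 : f.eigenspace (μ : ℝ) ≤ B) (hv1 μ)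
  have hli : LinearIndependent ℝ v :=
    (hind.comp Subtype.coe_injective).linearIndependent _ hv1 hv2
  have hli' : LinearIndependent ℝ (fun μ : S => (⟨v μ, hvB μ⟩ : B)) := by
    apply LinearIndependent.of_comp B.subtype
    convert hli
    rfl
  have hcardS : S.ncard ≤ Module.finrank ℝ B := by
    have h1 := hli'.fintype_card_le_finrank
    rw [← Nat.card_coe_set_eq, Nat.card_eq_fintype_card]
    exact h1
  have hsum : Module.finrank ℝ (f.eigenspace lam) + Module.finrank ℝ B ≤ Fintype.card V := by
    have := Submodule.finrank_add_finrank_le_of_disjoint hdisj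
    rwa [Module.finrank_pi] at this
  have hSn : S.ncard = E.ncard - 1 := Set.ncard_diff_singleton_of_mem hlam
  have hs1 : 0 < E.ncard := (Set.ncard_pos hEfin).2 ⟨lam, hlam⟩
  have key : X.card + E.ncard ≤ Fintype.card V + 1 := by omega
  -- δ ≤ n and degree facts
  have hX0 : 0 < X.card := hX.2.1 ▸ hX.1
  have hVpos : 0 < Fintype.card V := by omega
  have hVne : Nonempty V := Fintype.card_pos_iff.mp hVpos
  obtain ⟨v0⟩ := hVne
  have hdegle : ∀ w : V, minDeg G ≤ G.degree w := by
    intro w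
    apply Nat.sInf_le
    refine ⟨w, ?_⟩
    rw [Set.ncard_eq_toFinset_card', Set.toFinset_card, G.card_neighborSet_eq_degree]
  have hδn : minDeg G ≤ Fintype.card V := by
    refine le_trans (hdegle v0) ?_
    rw [← SimpleGraph.card_neighborFinset_eq_degree]
    exact le_trans (Finset.card_le_univ _) (le_of_eq Finset.card_univ)
  have hmp : X.card + p ≤ minDeg G + 1 := by
    have hsE : Fintype.card V - minDeg G + p ≤ E.ncard := hs
    omega
  -- final
  intro w hw
  rw [Finset.mem_compl, not_not] at hw
  have hNX : (G.neighborFinset w ∩ X).card + 1 ≤ X.card := by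
    have hsub : G.neighborFinset w ∩ X ⊆ X.erase w := by
      intro u hu
      rw [Finset.mem_inter] at hu
      refine Finset.mem_erase.2 ⟨?_, hu.2⟩
      rintro rfl
      rw [SimpleGraph.mem_neighborFinset] at hu
      exact G.irrefl hu.1
    calc (G.neighborFinset w ∩ X).card + 1 ≤ (X.erase w).card + 1 :=
          by exact Nat.add_le_add_right (Finset.card_le_card hsub) 1
      _ = X.card := by rw [Finset.card_erase_of_mem hw]; omega
  have hsplit : (G.neighborFinset w ∩ X).card + (G.neighborFinset w ∩ Xᶜ).card
      = G.degree w := by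
    rw [← Finset.card_union_of_disjoint]
    · congr 1
      rw [← Finset.inter_union_distrib_left, Finset.union_compl, Finset.inter_univ]
    · exact Finset.disjoint_left.2 fun a ha ha' => (Finset.mem_compl.1 (Finset.mem_inter.1 ha').2) (Finset.mem_inter.1 ha).2
  have hdeg := hdegle w
  have : p ≤ (G.neighborFinset w ∩ Xᶜ).card := by omega
  have hset : (G.neighborSet w ∩ ↑Xᶜ).ncard = (G.neighborFinset w ∩ Xᶜ).card := by
    rw [Set.ncard_eq_toFinset_card']
    congr 1
    ext u
    simp [SimpleGraph.mem_neighborFinset]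
  omega

end Aux


theorem stmt_10 (G : SimpleGraph V) (p : ℕ) (hp : 0 < p) (hpδ : p ≤ minDeg G)
    (hs : Fintype.card V - minDeg G + p ≤ numEigs G)
    (lam : ℝ) (X : Finset V) (hX : IsStarSet G lam X) :
    IsPDomSet G p Xᶜ := stmt_10' G p hp hpδ hs lam X hX
end

section
/- Let X be a star set for an eigenvalue λ ∉ {0, −1} of a graph G. Then the neighborhoods in V(G)\X of distinct vertices of X are distinct and non-empty. -/
open Matrix SimpleGraph

variable {V : Type*} [Fintype V] [DecidableEq V]

set_option linter.unusedSectionVars false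

lemma adjM_of_adj (G : SimpleGraph V) {i j : V} (h : G.Adj i j) : adjM G i j = 1 := by
  simp [adjM, SimpleGraph.adjMatrix, h]

lemma adjM_of_not_adj (G : SimpleGraph V) {i j : V} (h : ¬ G.Adj i j) : adjM G i j = 0 := by
  simp [adjM, SimpleGraph.adjMatrix, h]

lemma adjM_symm (G : SimpleGraph V) (i j : V) : adjM G i j = adjM G j i := by
  by_cases h : G.Adj i j
  · rw [adjM_of_adj G h, adjM_of_adj G h.symm]
  · rw [adjM_of_not_adj G h, adjM_of_not_adj G fun h' => h h'.symm]

lemma mem_eigker_iff (G : SimpleGraph V) (lam : ℝ) (x : V → ℝ) :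
    x ∈ LinearMap.ker (Matrix.toLin' (adjM G - lam • (1 : Matrix V V ℝ))) ↔
      (adjM G).mulVec x = lam • x := by
  rw [LinearMap.mem_ker, Matrix.toLin'_apply, Matrix.sub_mulVec, Matrix.smul_mulVec,
    Matrix.one_mulVec, sub_eq_zero]

lemma mulVec_apply' (M : Matrix V V ℝ) (x : V → ℝ) (i : V) :
    M.mulVec x i = ∑ j, M i j * x j := rfl

lemma vanish_of_eig (G : SimpleGraph V) (lam : ℝ) (X : Finset V)
    (hX3 : ∀ α : {v : V // v ∉ X} → ℝ,
      (Matrix.of fun i j : {v : V // v ∉ X} => adjM G i.1 j.1).mulVec α = lam • α → α = 0)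
    (x : V → ℝ) (hx : (adjM G).mulVec x = lam • x) (hX0 : ∀ v ∈ X, x v = 0) : x = 0 := by
  have key : (fun i : {v : V // v ∉ X} => x i.1) = 0 := by
    apply hX3
    funext i
    have hsub : ∑ j ∈ Xᶜ, adjM G i.1 j * x j
        = ∑ j : {v : V // v ∉ X}, adjM G i.1 j.1 * x j.1 :=
      Finset.sum_subtype Xᶜ (fun v => Finset.mem_compl) (fun j => adjM G i.1 j * x j)
    have htot := congrFun hx i.1
    rw [mulVec_apply'] at htot
    rw [← Finset.sum_compl_add_sum X (fun j => adjM G i.1 j * x j)] at htot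
    have hXz : ∑ j ∈ X, adjM G i.1 j * x j = 0 :=
      Finset.sum_eq_zero fun j hj => by rw [hX0 j hj, mul_zero]
    rw [hXz, add_zero, hsub] at htot
    simpa [mulVec_apply'] using htot
  funext v
  by_cases hv : v ∈ X
  · exact hX0 v hv
  · exact congrFun key ⟨v, hv⟩

theorem stmt_13 (G : SimpleGraph V) (lam : ℝ) (h0 : lam ≠ 0) (h1 : lam ≠ -1)
    (X : Finset V) (hX : IsStarSet G lam X) :
    (∀ u ∈ X, (G.neighborSet u \ ↑X).Nonempty) ∧
    (∀ u ∈ X, ∀ w ∈ X, u ≠ w →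
      G.neighborSet u \ ↑X ≠ G.neighborSet w \ ↑X) := by
  obtain ⟨-, hcard, hker⟩ := hX
  set E := LinearMap.ker (Matrix.toLin' (adjM G - lam • (1 : Matrix V V ℝ))) with hE
  let r : E →ₗ[ℝ] ({v : V // v ∈ X} → ℝ) :=
    (LinearMap.funLeft ℝ ℝ Subtype.val).comp E.subtype
  have hrinj : Function.Injective r := by
    rw [← LinearMap.ker_eq_bot, LinearMap.ker_eq_bot']
    intro m hm
    apply Subtype.ext
    apply vanish_of_eig G lam X hker m.1 ((mem_eigker_iff G lam m.1).mp m.2)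
    intro v hv
    exact congrFun hm ⟨v, hv⟩
  have hrsurj : Function.Surjective r := by
    rw [← LinearMap.injective_iff_surjective_of_finrank_eq_finrank ?_]
    · exact hrinj
    · rw [show Module.finrank ℝ E = eigMult G lam from rfl, hcard,
        Module.finrank_fintype_fun_eq_card, Fintype.card_coe]
  have hvec : ∀ u ∈ X, ∃ x : V → ℝ, (adjM G).mulVec x = lam • x ∧ x u = 1 ∧
      ∀ w ∈ X, w ≠ u → x w = 0 := by
    intro u hu
    obtain ⟨m, hm⟩ := hrsurj (Pi.single ⟨u, hu⟩ 1)
    refine ⟨m.1, (mem_eigker_iff G lam m.1).mp m.2, ?_, ?_⟩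
    · have h := congrFun hm ⟨u, hu⟩
      simpa [r] using h
    · intro w hw hwu
      have h := congrFun hm ⟨w, hw⟩
      rw [Pi.single_eq_of_ne (by simpa [Subtype.ext_iff] using hwu)] at h
      exact h
  constructor
  · intro u hu
    by_contra hemp
    rw [Set.not_nonempty_iff_eq_empty] at hemp
    have hall : ∀ v, G.Adj u v → v ∈ X := by
      intro v hv
      by_contra hvX
      exact absurd hemp (Set.nonempty_iff_ne_empty.mp ⟨v, hv, hvX⟩)
    obtain ⟨x, hx, hxu, hx0⟩ := hvec u hu
    have heq := congrFun hx u
    rw [mulVec_apply'] at heq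
    have hz : ∑ j, adjM G u j * x j = 0 := by
      apply Finset.sum_eq_zero
      intro j _
      by_cases hj : G.Adj u j
      · rw [hx0 j (hall j hj) (G.ne_of_adj hj).symm, mul_zero]
      · rw [adjM_of_not_adj G hj, zero_mul]
    rw [hz] at heq
    simp [hxu] at heq
    exact h0 heq.symm
  · intro u hu w hw huw hN
    obtain ⟨x, hx, hxu, hx0⟩ := hvec u hu
    obtain ⟨y, hy, hyw, hy0⟩ := hvec w hw
    have hadjEq : ∀ j, j ∉ X → adjM G u j = adjM G w j := by
      intro j hj
      have hiff : G.Adj u j ↔ G.Adj w j := by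
        constructor
        · intro h
          have hm : j ∈ G.neighborSet u \ ↑X := ⟨h, hj⟩
          rw [hN] at hm; exact hm.1
        · intro h
          have hm : j ∈ G.neighborSet w \ ↑X := ⟨h, hj⟩
          rw [← hN] at hm; exact hm.1
      by_cases h : G.Adj u j
      · rw [adjM_of_adj G h, adjM_of_adj G (hiff.mp h)]
      · rw [adjM_of_not_adj G h, adjM_of_not_adj G (fun h' => h (hiff.mpr h'))]
    set z : V → ℝ := x - y with hzdef
    have hzeig : (adjM G).mulVec z = lam • z := by
      rw [hzdef, Matrix.mulVec_sub, hx, hy, smul_sub]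
    have hzu : z u = 1 := by simp [hzdef, hxu, hy0 u hu huw]
    have hzw : z w = -1 := by simp [hzdef, hyw, hx0 w hw (Ne.symm huw)]
    have hzother : ∀ j ∈ X, j ≠ u → j ≠ w → z j = 0 := by
      intro j hj hju hjw
      simp [hzdef, hx0 j hj hju, hy0 j hj hjw]
    set a : ℝ := adjM G u w with hadef
    -- X-part of the sum at u
    have hXu : ∑ j ∈ X, adjM G u j * z j = -a := by
      rw [Finset.sum_eq_single_of_mem w hw]
      · rw [hzw]; ring
      · intro j hj hjw
        by_cases hju : j = u
        · rw [hju, adjM_of_not_adj G (G.irrefl), zero_mul]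
        · rw [hzother j hj hju hjw, mul_zero]
    have hXw : ∑ j ∈ X, adjM G w j * z j = a := by
      rw [Finset.sum_eq_single_of_mem u hu]
      · rw [hzu, hadef, adjM_symm]; ring
      · intro j hj hju
        by_cases hjw : j = w
        · rw [hjw, adjM_of_not_adj G (G.irrefl), zero_mul]
        · rw [hzother j hj hju hjw, mul_zero]
    have hSeq : ∑ j ∈ Xᶜ, adjM G u j * z j = ∑ j ∈ Xᶜ, adjM G w j * z j :=
      Finset.sum_congr rfl fun j hj => by
        rw [hadjEq j (Finset.mem_compl.mp hj)]
    have hequ := congrFun hzeig u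
    have heqw := congrFun hzeig w
    rw [mulVec_apply', ← Finset.sum_compl_add_sum X (fun j => adjM G u j * z j), hXu] at hequ
    rw [mulVec_apply', ← Finset.sum_compl_add_sum X (fun j => adjM G w j * z j), hXw] at heqw
    simp only [Pi.smul_apply, smul_eq_mul, hzu, hzw, mul_one, mul_neg] at hequ heqw
    rw [hSeq] at hequ
    have hlam : lam = -a := by linarith
    by_cases hadj : G.Adj u w
    · rw [hadef, adjM_of_adj G hadj] at hlam
      exact h1 hlam
    · rw [hadef, adjM_of_not_adj G hadj] at hlam
      exact h0 (by linarith)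
end
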